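/- Let $x_1, \dots, x_n$ be distinct real numbers. Then there exists a set of indices $i_1 < i_2 < \dots < i_k$ such that the subsequence $x_{i_1}, \dots, x_{i_k}$ is monotone (either increasing or decreasing) and $\sum_{j=1}^k x_{i_j} \geq \left( \sum_{i=1}^n \max(x_i, 0)^2 \right)^{1/2}$, where the empty sum is taken to be $0$. -/

import Mathlib

open Finset
open scoped Classical in
noncomputable def auxSeq (x : ℕ → ℝ) : ℕ → NNReal
  | m => ((Finset.range m).attach.filter (fun j => x j.1 < x m ∧ 0 < x j.1)).sup
      (fun j => auxSeq x j.1) + (x m).toNNReal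
  termination_by m => m
  decreasing_by exact Finset.mem_range.mp j.2

lemma toNNReal_le_auxSeq (x : ℕ → ℝ) (m : ℕ) : (x m).toNNReal ≤ auxSeq x m := by
  rw [auxSeq]; exact le_add_self

lemma le_auxSeq (x : ℕ → ℝ) {i m : ℕ} (him : i < m) (hlt : x i < x m) (hpos : 0 < x i) :
    auxSeq x i + (x m).toNNReal ≤ auxSeq x m := by
  classical
  conv_rhs => rw [auxSeq]
  refine add_le_add ?_ le_rfl
  refine Finset.le_sup (f := fun j => auxSeq x j.1)
    (b := (⟨i, Finset.mem_range.mpr him⟩ : {a // a ∈ Finset.range m})) ?_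
  simp [Finset.mem_filter, hlt, hpos]

lemma strictMono_snoc {α : Type*} [Preorder α] {k : ℕ} {f : Fin (k + 1) → α} {a : α}
    (hf : StrictMono f) (h : f (Fin.last k) < a) : StrictMono (Fin.snoc f a) := by
  intro u v huv
  induction v using Fin.lastCases with
  | last =>
    have hu : u ≠ Fin.last (k + 1) := ne_of_lt huv
    obtain ⟨u', rfl⟩ := Fin.exists_castSucc_eq.mpr hu
    simpa using lt_of_le_of_lt (hf.monotone (Fin.le_last u')) h
  | cast v' =>
    have hu : u ≠ Fin.last (k + 1) := by
      intro h; rw [h] at huv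
      exact absurd (lt_of_le_of_lt (Fin.le_last _) huv) (lt_irrefl _)
    obtain ⟨u', rfl⟩ := Fin.exists_castSucc_eq.mpr hu
    simpa using hf (by exact_mod_cast huv)

lemma exists_chain (x : ℕ → ℝ) : ∀ m, 0 < x m → ∃ (k : ℕ) (f : Fin (k + 1) → ℕ),
    StrictMono f ∧ StrictMono (x ∘ f) ∧ (∀ t, 0 < x (f t)) ∧ f (Fin.last k) = m ∧
    ∑ t, x (f t) = (auxSeq x m : ℝ) := by
  intro m
  induction m using Nat.strong_induction_on with
  | _ m ih =>
    intro hm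
    classical
    set F := ((Finset.range m).attach.filter (fun j => x j.1 < x m ∧ 0 < x j.1)) with hF
    rcases F.eq_empty_or_nonempty with hFe | hFn
    · have hss : ∀ (g : Fin (0 + 1) → ℕ) (y : ℕ → ℝ), StrictMono (y ∘ g) := by
        intro g y a b hab
        exact absurd hab (by simp [Fin.fin_one_eq_zero a, Fin.fin_one_eq_zero b])
      refine ⟨0, fun _ => m, fun a b hab => absurd hab
        (by simp [Fin.fin_one_eq_zero a, Fin.fin_one_eq_zero b]), hss _ _,
        fun _ => hm, rfl, ?_⟩
      rw [auxSeq]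
      rw [← hF, hFe]
      simp [Real.coe_toNNReal _ hm.le]
    · obtain ⟨j, hjF, hjsup⟩ := Finset.exists_mem_eq_sup F hFn (fun j => auxSeq x j.1)
      have hjprop := Finset.mem_filter.mp hjF
      have hjm : j.1 < m := Finset.mem_range.mp j.2
      obtain ⟨k, f, hmono, hxmono, hpos, hlast, hsum⟩ := ih j.1 hjm hjprop.2.2
      refine ⟨k + 1, Fin.snoc f m, ?_, ?_, ?_, ?_, ?_⟩
      · exact strictMono_snoc hmono (by rw [hlast]; exact hjm)
      · rw [Fin.comp_snoc]
        exact strictMono_snoc hxmono (by simp [hlast]; exact hjprop.2.1)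
      · intro t
        induction t using Fin.lastCases with
        | last => simpa using hm
        | cast t' => simpa using hpos t'
      · simp
      · rw [Fin.sum_univ_castSucc]
        simp only [Fin.snoc_castSucc, Fin.snoc_last]
        rw [hsum]
        have hexp : auxSeq x m = F.sup (fun j => auxSeq x j.1) + (x m).toNNReal := by
          rw [auxSeq, ← hF]
        rw [hexp, hjsup]
        push_cast [Real.coe_toNNReal _ hm.le]
        ring
lemma key_ineq (n : ℕ) (X Y : ℕ → ℝ)
    (hY : ∀ i < n, Y (n - 1 - i) = X i)
    (hinj : ∀ i < n, ∀ j < n, X i = X j → i = j) :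
    ∑ i ∈ (Finset.range n).filter (fun i => 0 < X i), X i ^ 2 ≤
      ((((Finset.range n).filter (fun i => 0 < X i)).sup (fun i => auxSeq X i) : NNReal) : ℝ) *
      ((((Finset.range n).filter (fun i => 0 < X i)).sup
        (fun i => auxSeq Y (n - 1 - i)) : NNReal) : ℝ) := by
  classical
  set P := (Finset.range n).filter (fun i => 0 < X i) with hP
  set AN : NNReal := P.sup (fun i => auxSeq X i) with hAN
  set BN : NNReal := P.sup (fun i => auxSeq Y (n - 1 - i)) with hBN
  set A : ℝ := (AN : ℝ) with hA
  set B : ℝ := (BN : ℝ) with hB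
  set a : ℕ → ℝ := fun i => (auxSeq X i : ℝ) with ha
  set b : ℕ → ℝ := fun i => (auxSeq Y (n - 1 - i) : ℝ) with hb
  set R : ℕ → Set (ℝ × ℝ) :=
    fun i => Set.Ioc (a i - X i) (a i) ×ˢ Set.Ioc (b i - X i) (b i) with hR
  have hmem : ∀ i ∈ P, i < n ∧ 0 < X i := by
    intro i hi
    exact ⟨Finset.mem_range.mp (Finset.mem_filter.mp hi).1, (Finset.mem_filter.mp hi).2⟩
  have hXa : ∀ i, 0 < X i → X i ≤ a i := by
    intro i hi
    have h1 := toNNReal_le_auxSeq X i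
    calc X i = ((X i).toNNReal : ℝ) := (Real.coe_toNNReal _ hi.le).symm
      _ ≤ a i := by exact_mod_cast h1
  have hXb : ∀ i, i < n → 0 < X i → X i ≤ b i := by
    intro i hin hi
    have h1 := toNNReal_le_auxSeq Y (n - 1 - i)
    rw [hY i hin] at h1
    calc X i = ((X i).toNNReal : ℝ) := (Real.coe_toNNReal _ hi.le).symm
      _ ≤ b i := by exact_mod_cast h1
  have haA : ∀ i ∈ P, a i ≤ A := by
    intro i hi
    exact_mod_cast Finset.le_sup (f := fun i => auxSeq X i) hi
  have hbB : ∀ i ∈ P, b i ≤ B := by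
    intro i hi
    exact_mod_cast Finset.le_sup (f := fun i => auxSeq Y (n - 1 - i)) hi
  -- pairwise disjointness
  have hdisj : ∀ i ∈ P, ∀ j ∈ P, i < j → Disjoint (R i) (R j) := by
    intro i hi j hj hij
    obtain ⟨hin, hXi⟩ := hmem i hi
    obtain ⟨hjn, hXj⟩ := hmem j hj
    have hne : X i ≠ X j := fun h => absurd (hinj i hin j hjn h) (Nat.ne_of_lt hij)
    rcases hne.lt_or_gt with hlt | hlt
    · have h1 := le_auxSeq X hij hlt hXi
      have h2 : a i + X j ≤ a j := by
        have := (NNReal.coe_le_coe).mpr h1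
        push_cast at this
        rwa [Real.coe_toNNReal _ hXj.le] at this
      rw [Set.disjoint_left]
      rintro ⟨z1, z2⟩ hzi hzj
      have e1 : z1 ≤ a i := hzi.1.2
      have e2 : a j - X j < z1 := hzj.1.1
      linarith
    · have hsub : n - 1 - j < n - 1 - i := by omega
      have hYi : Y (n - 1 - i) = X i := hY i hin
      have hYj : Y (n - 1 - j) = X j := hY j hjn
      have h1 := le_auxSeq Y hsub (by rw [hYi, hYj]; exact hlt) (by rw [hYj]; exact hXj)
      have h2 : b j + X i ≤ b i := by
        have := (NNReal.coe_le_coe).mpr h1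
        push_cast at this
        rwa [hYi, Real.coe_toNNReal _ hXi.le] at this
      rw [Set.disjoint_left]
      rintro ⟨z1, z2⟩ hzi hzj
      have e1 : z2 ≤ b j := hzj.2.2
      have e2 : b i - X i < z2 := hzi.2.1
      linarith
  have hpd : Set.PairwiseDisjoint (↑P : Set ℕ) R := by
    intro i hi j hj hne
    rcases lt_or_gt_of_ne hne with h | h
    · exact hdisj i hi j hj h
    · exact (hdisj j hj i hi h).symm
  have hmeas : ∀ i ∈ P, MeasurableSet (R i) :=
    fun i _ => (measurableSet_Ioc.prod measurableSet_Ioc)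
  have hvol : ∀ i ∈ P, MeasureTheory.volume (R i) =
      ENNReal.ofReal (X i) * ENNReal.ofReal (X i) := by
    intro i hi
    rw [hR]
    simp only
    rw [MeasureTheory.Measure.volume_eq_prod, MeasureTheory.Measure.prod_prod,
      Real.volume_Ioc, Real.volume_Ioc, sub_sub_cancel, sub_sub_cancel]
  have hsub : (⋃ i ∈ P, R i) ⊆ Set.Ioc 0 A ×ˢ Set.Ioc 0 B := by
    rintro z hz
    simp only [Set.mem_iUnion] at hz
    obtain ⟨i, hi, hzi⟩ := hz
    obtain ⟨hin, hXi⟩ := hmem i hi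
    constructor
    · constructor
      · have := hzi.1.1
        have h0 : 0 ≤ a i - X i := by linarith [hXa i hXi]
        linarith
      · exact le_trans hzi.1.2 (haA i hi)
    · constructor
      · have := hzi.2.1
        have h0 : 0 ≤ b i - X i := by linarith [hXb i hin hXi]
        linarith
      · exact le_trans hzi.2.2 (hbB i hi)
  have hbig : ∑ i ∈ P, ENNReal.ofReal (X i ^ 2) ≤ ENNReal.ofReal (A * B) := by
    calc ∑ i ∈ P, ENNReal.ofReal (X i ^ 2)
        = ∑ i ∈ P, MeasureTheory.volume (R i) := by
          refine Finset.sum_congr rfl fun i hi => ?_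
          rw [hvol i hi, ← ENNReal.ofReal_mul (hmem i hi).2.le, sq]
      _ = MeasureTheory.volume (⋃ i ∈ P, R i) :=
          (MeasureTheory.measure_biUnion_finset hpd hmeas).symm
      _ ≤ MeasureTheory.volume (Set.Ioc 0 A ×ˢ Set.Ioc 0 B) :=
          MeasureTheory.measure_mono hsub
      _ = ENNReal.ofReal A * ENNReal.ofReal B := by
          rw [MeasureTheory.Measure.volume_eq_prod, MeasureTheory.Measure.prod_prod,
            Real.volume_Ioc, Real.volume_Ioc, sub_zero, sub_zero]
      _ = ENNReal.ofReal (A * B) := by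
          rw [ENNReal.ofReal_mul AN.coe_nonneg]
  rw [← ENNReal.ofReal_sum_of_nonneg (fun i _ => sq_nonneg (X i))] at hbig
  exact (ENNReal.ofReal_le_ofReal_iff (mul_nonneg AN.coe_nonneg BN.coe_nonneg)).mp hbig

theorem stmt_3 (n : ℕ) (x : Fin n → ℝ) (hx : Function.Injective x) :
    ∃ (k : ℕ) (i : Fin k → Fin n), StrictMono i ∧
      (StrictMono (x ∘ i) ∨ StrictAnti (x ∘ i)) ∧
      Real.sqrt (∑ t : Fin n, max (x t) 0 ^ 2) ≤ ∑ j : Fin k, x (i j) := by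
  classical
  set X : ℕ → ℝ := fun m => if h : m < n then x ⟨m, h⟩ else 0 with hXdef
  set Y : ℕ → ℝ := fun t => if t < n then X (n - 1 - t) else 0 with hYdef
  have hXval : ∀ (t : Fin n), X t.1 = x t := by
    intro t; simp [hXdef]
  set P := (Finset.range n).filter (fun i => 0 < X i) with hP
  have hS : ∑ t : Fin n, max (x t) 0 ^ 2 = ∑ i ∈ P, X i ^ 2 := by
    calc ∑ t : Fin n, max (x t) 0 ^ 2 = ∑ t : Fin n, max (X t.1) 0 ^ 2 := by
          refine Finset.sum_congr rfl fun t _ => ?_; rw [hXval t]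
      _ = ∑ i ∈ Finset.range n, max (X i) 0 ^ 2 :=
          Fin.sum_univ_eq_sum_range (fun i => max (X i) 0 ^ 2) n
      _ = ∑ i ∈ P, X i ^ 2 := by
          rw [hP, Finset.sum_filter]
          refine Finset.sum_congr rfl fun i _ => ?_
          split_ifs with h
          · rw [max_eq_left h.le]
          · rw [max_eq_right (le_of_not_gt h)]
            simp
  rcases P.eq_empty_or_nonempty with hPe | hPn
  · refine ⟨0, Fin.elim0, fun a => a.elim0, Or.inl (fun a => a.elim0), ?_⟩
    rw [hS, hPe]
    simp
  · have hY' : ∀ i < n, Y (n - 1 - i) = X i := by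
      intro i hin
      have h1 : n - 1 - i < n := by omega
      simp only [hYdef]
      rw [if_pos h1]
      congr 1
      omega
    have hinj' : ∀ i < n, ∀ j < n, X i = X j → i = j := by
      intro i hi j hj hij
      have e1 : X i = x ⟨i, hi⟩ := by simp [hXdef, hi]
      have e2 : X j = x ⟨j, hj⟩ := by simp [hXdef, hj]
      have : (⟨i, hi⟩ : Fin n) = ⟨j, hj⟩ := hx (by rw [← e1, ← e2]; exact hij)
      simpa using this
    have key := key_ineq n X Y hY' hinj'
    rw [← hP] at key
    set AN : NNReal := P.sup (fun i => auxSeq X i) with hAN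
    set BN : NNReal := P.sup (fun i => auxSeq Y (n - 1 - i)) with hBN
    have hsqrt : Real.sqrt (∑ t : Fin n, max (x t) 0 ^ 2) ≤ max (AN : ℝ) (BN : ℝ) := by
      rw [hS]
      set M : ℝ := max (AN : ℝ) (BN : ℝ) with hM
      have hMnn : 0 ≤ M := le_trans AN.coe_nonneg (le_max_left _ _)
      calc Real.sqrt (∑ i ∈ P, X i ^ 2) ≤ Real.sqrt ((AN : ℝ) * (BN : ℝ)) :=
            Real.sqrt_le_sqrt key
        _ ≤ Real.sqrt (M * M) := Real.sqrt_le_sqrt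
            (mul_le_mul (le_max_left _ _) (le_max_right _ _) BN.coe_nonneg hMnn)
        _ = M := Real.sqrt_mul_self hMnn
    have hfn' : ∀ (m : ℕ), 0 < X m → m < n := by
      intro m hm
      by_contra h
      rw [hXdef] at hm
      simp only [dif_neg h] at hm
      exact absurd hm (lt_irrefl 0)
    rcases le_total (BN : ℝ) (AN : ℝ) with hAB | hAB
    · -- increasing chain realizes AN
      obtain ⟨i0, hi0P, hi0⟩ := Finset.exists_mem_eq_sup P hPn (fun i => auxSeq X i)
      have hXi0 : 0 < X i0 := (Finset.mem_filter.mp hi0P).2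
      obtain ⟨k, f, hf, hxf, hfpos, _, hfsum⟩ := exists_chain X i0 hXi0
      have hfn : ∀ t, f t < n := fun t => hfn' _ (hfpos t)
      refine ⟨k + 1, fun t => ⟨f t, hfn t⟩, ?_, Or.inl ?_, ?_⟩
      · intro u v huv
        exact Fin.mk_lt_mk.mpr (hf huv)
      · intro u v huv
        show x ⟨f u, hfn u⟩ < x ⟨f v, hfn v⟩
        rw [← hXval ⟨f u, hfn u⟩, ← hXval ⟨f v, hfn v⟩]
        exact hxf huv
      · have hsum2 : ∑ j : Fin (k + 1), x ⟨f j, hfn j⟩ = (auxSeq X i0 : ℝ) := by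
          rw [← hfsum]
          exact Finset.sum_congr rfl fun j _ => (hXval ⟨f j, hfn j⟩).symm
        calc Real.sqrt (∑ t : Fin n, max (x t) 0 ^ 2) ≤ max (AN : ℝ) (BN : ℝ) := hsqrt
          _ = (AN : ℝ) := max_eq_left hAB
          _ = (auxSeq X i0 : ℝ) := by rw [hAN, hi0]
          _ = ∑ j : Fin (k + 1), x ⟨f j, hfn j⟩ := hsum2.symm
    · -- decreasing chain realizes BN
      obtain ⟨i0, hi0P, hi0⟩ :=
        Finset.exists_mem_eq_sup P hPn (fun i => auxSeq Y (n - 1 - i))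
      have hi0n : i0 < n := Finset.mem_range.mp (Finset.mem_filter.mp hi0P).1
      have hn : 0 < n := Nat.pos_of_ne_zero (by omega)
      have hXi0 : 0 < X i0 := (Finset.mem_filter.mp hi0P).2
      have hYpos : 0 < Y (n - 1 - i0) := by rw [hY' i0 hi0n]; exact hXi0
      obtain ⟨k, f, hf, hyf, hfpos, hflast, hfsum⟩ := exists_chain Y (n - 1 - i0) hYpos
      have hfn : ∀ t, f t < n := by
        intro t
        by_contra h
        have hz : Y (f t) = 0 := by rw [hYdef]; simp only [if_neg h]
        have := hfpos t
        rw [hz] at this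
        exact lt_irrefl 0 this
      have hgn : ∀ t : Fin (k + 1), n - 1 - f t.rev < n := fun t => by omega
      have e : ∀ t : Fin (k + 1), x ⟨n - 1 - f t.rev, hgn t⟩ = Y (f t.rev) := by
        intro t
        rw [← hXval ⟨n - 1 - f t.rev, hgn t⟩]
        have h2 := hY' (n - 1 - f t.rev) (hgn t)
        rw [show n - 1 - (n - 1 - f t.rev) = f t.rev by have := hfn t.rev; omega] at h2
        exact h2.symm
      refine ⟨k + 1, fun t => ⟨n - 1 - f t.rev, hgn t⟩, ?_, Or.inr ?_, ?_⟩
      · intro u v huv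
        have hrev : v.rev < u.rev := Fin.rev_lt_rev.mpr huv
        have h1 := hf hrev
        have h2 := hfn u.rev
        exact Fin.mk_lt_mk.mpr (by omega)
      · intro u v huv
        have hrev : v.rev < u.rev := Fin.rev_lt_rev.mpr huv
        have hlt := hyf hrev
        show x ⟨n - 1 - f v.rev, hgn v⟩ < x ⟨n - 1 - f u.rev, hgn u⟩
        rw [e u, e v]
        exact hlt
      · have hsum2 : ∑ j : Fin (k + 1), x ⟨n - 1 - f j.rev, hgn j⟩ =
            ∑ j : Fin (k + 1), Y (f j) := by
          rw [Finset.sum_congr rfl fun j _ => e j]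
          exact Fintype.sum_bijective Fin.rev Fin.rev_bijective _ _ (fun t => rfl)
        calc Real.sqrt (∑ t : Fin n, max (x t) 0 ^ 2) ≤ max (AN : ℝ) (BN : ℝ) := hsqrt
          _ = (BN : ℝ) := max_eq_right hAB
          _ = (auxSeq Y (n - 1 - i0) : ℝ) := by rw [hBN, hi0]
          _ = ∑ j : Fin (k + 1), Y (f j) := hfsum.symm
          _ = ∑ j : Fin (k + 1), x ⟨n - 1 - f j.rev, hgn j⟩ := hsum2.symm
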